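/- Let τ ∈ C_b(ℝ). The set {f ∈ 𝒜_τ ∩ C_c(ℝ) : supp f ⊆ {x : |τ(x)| ≤ ε} for some ε ∈ (0,1)} is dense in 𝒜_τ with respect to the norm ‖·‖_τ. -/

import Mathlib

open Filter

/-- `f` belongs to the Segal algebra `𝒜_τ`. -/
def MemSegal (τ f : ℝ → ℝ) : Prop :=
  Continuous f ∧ Tendsto f (cocompact ℝ) (nhds 0) ∧
    Summable (fun k : ℕ => ⨆ x : ℝ, |f x * τ x ^ k|)

/-- The Segal norm `‖f‖_τ`. -/
noncomputable def segalNorm (τ f : ℝ → ℝ) : ℝ :=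
  ∑' k : ℕ, ⨆ x : ℝ, |f x * τ x ^ k|

/-- The set of compactly supported members of `𝒜_τ` whose support is
contained in `{x : |τ x| ≤ ε}` for some `ε ∈ (0,1)` is dense in `𝒜_τ` for `‖·‖_τ`. -/
theorem segal_compactly_supported_dense (τ : ℝ → ℝ)
    (hτc : Continuous τ) (hτb : ∃ C, ∀ x, |τ x| ≤ C) :
    ∀ f : ℝ → ℝ, MemSegal τ f → ∀ δ : ℝ, 0 < δ →
      ∃ g : ℝ → ℝ, MemSegal τ g ∧ HasCompactSupport g ∧
        (∃ ε : ℝ, 0 < ε ∧ ε < 1 ∧ tsupport g ⊆ {x : ℝ | |τ x| ≤ ε}) ∧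
        segalNorm τ (fun x => f x - g x) < δ := by
  intro f hf δ hδ
  obtain ⟨hfc, hf0, hsum⟩ := hf
  obtain ⟨C, hC⟩ := hτb
  set C' : ℝ := max C 1 with hC'def
  have hC'1 : (1:ℝ) ≤ C' := le_max_right _ _
  have hC'0 : (0:ℝ) < C' := lt_of_lt_of_le one_pos hC'1
  have hτC' : ∀ x, |τ x| ≤ C' := fun x => (hC x).trans (le_max_left _ _)
  -- global bound on f
  obtain ⟨Bf, hBf0, hBf⟩ : ∃ B : ℝ, 0 < B ∧ ∀ x, |f x| ≤ B := by
    obtain ⟨K₁, hK₁c, hK₁⟩ := Filter.mem_cocompact.mp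
      (hf0 (Metric.ball_mem_nhds (0:ℝ) one_pos))
    obtain ⟨M, hM⟩ := (hK₁c.image (continuous_abs.comp hfc)).bddAbove
    refine ⟨max M 1, lt_of_lt_of_le one_pos (le_max_right _ _), fun x => ?_⟩
    by_cases hx : x ∈ K₁
    · exact le_trans (hM (Set.mem_image_of_mem _ hx)) (le_max_left _ _)
    · have h1 := hK₁ hx
      simp only [Set.mem_preimage, Metric.mem_ball, Real.dist_eq, sub_zero] at h1
      exact le_trans h1.le (le_max_right _ _)
  have hfτ : ∀ (k : ℕ) (x : ℝ), |f x * τ x ^ k| ≤ Bf * C' ^ k := by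
    intro k x
    rw [abs_mul, abs_pow]
    exact mul_le_mul (hBf x) (pow_le_pow_left₀ (abs_nonneg _) (hτC' x) k)
      (pow_nonneg (abs_nonneg _) k) hBf0.le
  have hbd : ∀ k : ℕ, BddAbove (Set.range fun x => |f x * τ x ^ k|) := by
    intro k
    exact ⟨Bf * C' ^ k, by rintro y ⟨x, rfl⟩; exact hfτ k x⟩
  have hble : ∀ (k : ℕ) (x : ℝ), |f x * τ x ^ k| ≤ ⨆ y, |f y * τ y ^ k| :=
    fun k x => le_ciSup (hbd k) x
  -- where f is nonzero, |τ| < 1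
  have hτlt : ∀ x, f x ≠ 0 → |τ x| < 1 := by
    intro x hx
    by_contra h
    push_neg at h
    have hkey : ∀ k : ℕ, |f x| ≤ ⨆ y, |f y * τ y ^ k| := by
      intro k
      calc |f x| = |f x| * 1 := (mul_one _).symm
        _ ≤ |f x| * |τ x| ^ k :=
            mul_le_mul_of_nonneg_left (one_le_pow₀ h) (abs_nonneg _)
        _ = |f x * τ x ^ k| := by rw [abs_mul, abs_pow]
        _ ≤ _ := hble k x
    have h2 : (0:ℝ) < |f x| := abs_pos.mpr hx
    have h3 := ge_of_tendsto hsum.tendsto_atTop_zero (Filter.Eventually.of_forall hkey)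
    linarith
  -- choose N with small tail
  obtain ⟨N₀, hN₀⟩ := Filter.eventually_atTop.mp
    ((tendsto_sum_nat_add (fun k => ⨆ x : ℝ, |f x * τ x ^ k|)).eventually
      (gt_mem_nhds (half_pos hδ)))
  set N : ℕ := N₀
  have htail : (∑' k : ℕ, ⨆ x : ℝ, |f x * τ x ^ (k + (N + 1))|) < δ / 2 := hN₀ (N + 1) (Nat.le_succ _)
  -- choose c
  have hN1 : (0:ℝ) < (N:ℝ) + 1 := by positivity
  set c : ℝ := δ / (4 * ((N:ℝ) + 1) * C' ^ N) with hcdef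
  have hc0 : 0 < c := by positivity
  -- the compact set where |f| ≥ c
  set Kc : Set ℝ := {x | c ≤ |f x|} with hKcdef
  have hKc_closed : IsClosed Kc := isClosed_le continuous_const (continuous_abs.comp hfc)
  obtain ⟨K₂, hK₂c, hK₂⟩ := Filter.mem_cocompact.mp (hf0 (Metric.ball_mem_nhds (0:ℝ) hc0))
  have hKc_cpt : IsCompact Kc := by
    refine hK₂c.of_isClosed_subset hKc_closed ?_
    intro x hx
    by_contra h
    have h1 := hK₂ h
    simp only [Set.mem_preimage, Metric.mem_ball, Real.dist_eq, sub_zero] at h1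
    exact absurd hx (by simpa [hKcdef] using not_le.mpr h1)
  have hKcτ : ∀ x ∈ Kc, |τ x| < 1 := by
    intro x hx
    refine hτlt x fun h0 => ?_
    have : c ≤ |f x| := hx
    rw [h0] at this; simp at this; linarith
  obtain ⟨ε₀, hε₀0, hε₀1, hε₀⟩ : ∃ ε₀ : ℝ, 0 ≤ ε₀ ∧ ε₀ < 1 ∧ ∀ x ∈ Kc, |τ x| ≤ ε₀ := by
    rcases Kc.eq_empty_or_nonempty with h | h
    · exact ⟨0, le_refl _, one_pos, by simp [h]⟩
    · obtain ⟨x₀, hx₀K, hx₀⟩ := hKc_cpt.exists_isMaxOn h (continuous_abs.comp hτc).continuousOn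
      exact ⟨max (|τ x₀|) 0, le_max_right _ _, max_lt (hKcτ x₀ hx₀K) one_pos,
        fun x hx => (hx₀ hx).trans (le_max_left _ _)⟩
  set ε₁ : ℝ := (2 * ε₀ + 1) / 3 with hε₁def
  set ε₂ : ℝ := (ε₀ + 2) / 3 with hε₂def
  have hε₀ε₁ : ε₀ < ε₁ := by rw [hε₁def]; linarith
  have hε₁pos : 0 < ε₁ := by rw [hε₁def]; linarith
  have hε₁ε₂ : ε₁ < ε₂ := by rw [hε₁def, hε₂def]; linarith
  have hε₂1 : ε₂ < 1 := by rw [hε₂def]; linarith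
  have hε₂pos : 0 < ε₂ := lt_trans hε₁pos hε₁ε₂
  -- R bounding Kc
  obtain ⟨R', hR'0, hR'⟩ : ∃ R : ℝ, 0 ≤ R ∧ ∀ x ∈ Kc, |x| ≤ R := by
    obtain ⟨R, hR⟩ := hKc_cpt.isBounded.subset_closedBall 0
    refine ⟨max R 0, le_max_right _ _, fun x hx => ?_⟩
    have := hR hx
    simp only [Metric.mem_closedBall, Real.dist_eq, sub_zero] at this
    exact this.trans (le_max_left _ _)
  have hsmall : ∀ x, (ε₁ < |τ x| ∨ R' < |x|) → |f x| < c := by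
    intro x hx
    by_contra h
    push_neg at h
    have hxK : x ∈ Kc := h
    rcases hx with h1 | h1
    · exact absurd (hε₀ x hxK) (not_le.mpr (lt_of_le_of_lt hε₀ε₁.le h1))
    · exact absurd (hR' x hxK) (not_le.mpr h1)
  -- cutoff functions
  set ψ : ℝ → ℝ := fun x => min 1 (max 0 ((ε₂ - |τ x|) / (ε₂ - ε₁))) with hψdef
  set χ : ℝ → ℝ := fun x => min 1 (max 0 (R' + 1 - |x|)) with hχdef
  have hden : (0:ℝ) < ε₂ - ε₁ := by linarith
  have hψc : Continuous ψ :=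
    continuous_const.min (continuous_const.max
      ((continuous_const.sub (continuous_abs.comp hτc)).div_const _))
  have hχc : Continuous χ :=
    continuous_const.min (continuous_const.max (continuous_const.sub continuous_abs))
  have hψ0 : ∀ x, 0 ≤ ψ x := fun x => le_min one_pos.le (le_max_left _ _)
  have hψle : ∀ x, ψ x ≤ 1 := fun x => min_le_left _ _
  have hχ0 : ∀ x, 0 ≤ χ x := fun x => le_min one_pos.le (le_max_left _ _)
  have hχle : ∀ x, χ x ≤ 1 := fun x => min_le_left _ _
  have hψ1 : ∀ x, |τ x| ≤ ε₁ → ψ x = 1 := by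
    intro x hx
    have h1 : (1:ℝ) ≤ (ε₂ - |τ x|) / (ε₂ - ε₁) := by
      rw [le_div_iff₀ hden]; linarith
    exact min_eq_left (h1.trans (le_max_right _ _))
  have hχ1 : ∀ x, |x| ≤ R' → χ x = 1 := by
    intro x hx
    exact min_eq_left ((by linarith : (1:ℝ) ≤ R' + 1 - |x|).trans (le_max_right _ _))
  have hψne : ∀ x, ψ x ≠ 0 → |τ x| < ε₂ := by
    intro x hx
    by_contra h
    push_neg at h
    have : (ε₂ - |τ x|) / (ε₂ - ε₁) ≤ 0 := div_nonpos_of_nonpos_of_nonneg (by linarith) hden.le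
    refine hx ?_
    show min 1 (max 0 ((ε₂ - |τ x|) / (ε₂ - ε₁))) = 0
    rw [max_eq_left this]
    simp
  have hχne : ∀ x, χ x ≠ 0 → |x| < R' + 1 := by
    intro x hx
    by_contra h
    push_neg at h
    refine hx ?_
    show min 1 (max 0 (R' + 1 - |x|)) = 0
    rw [max_eq_left (by linarith : R' + 1 - |x| ≤ 0)]
    simp
  -- the approximant
  set g : ℝ → ℝ := fun x => f x * (ψ x * χ x) with hgdef
  have hgx : ∀ y, g y = f y * (ψ y * χ y) := fun y => rfl
  have hψχ0 : ∀ x, 0 ≤ ψ x * χ x := fun x => mul_nonneg (hψ0 x) (hχ0 x)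
  have hψχle : ∀ x, ψ x * χ x ≤ 1 := fun x =>
    (mul_le_one₀ (hψle x) (hχ0 x) (hχle x))
  have hg_le : ∀ (k : ℕ) (x : ℝ), |g x * τ x ^ k| ≤ |f x * τ x ^ k| := by
    intro k x
    rw [hgx x]
    have : |f x * (ψ x * χ x) * τ x ^ k| = |f x * τ x ^ k| * |ψ x * χ x| := by
      rw [← abs_mul]; ring_nf
    rw [this]
    calc |f x * τ x ^ k| * |ψ x * χ x| ≤ |f x * τ x ^ k| * 1 :=
        mul_le_mul_of_nonneg_left (abs_le.mpr ⟨by linarith [hψχ0 x], hψχle x⟩) (abs_nonneg _)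
      _ = _ := mul_one _
  have hd_le : ∀ (k : ℕ) (x : ℝ), |(f x - g x) * τ x ^ k| ≤ |f x * τ x ^ k| := by
    intro k x
    have h1 : f x - g x = f x * (1 - ψ x * χ x) := by rw [hgx x]; ring
    rw [h1]
    have : |f x * (1 - ψ x * χ x) * τ x ^ k| = |f x * τ x ^ k| * |1 - ψ x * χ x| := by
      rw [← abs_mul]; ring_nf
    rw [this]
    calc |f x * τ x ^ k| * |1 - ψ x * χ x| ≤ |f x * τ x ^ k| * 1 :=
        mul_le_mul_of_nonneg_left (abs_le.mpr ⟨by linarith [hψχle x], by linarith [hψχ0 x]⟩)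
          (abs_nonneg _)
      _ = _ := mul_one _
  -- smallness for k ≤ N
  have hd_small : ∀ k : ℕ, k ≤ N → ∀ x, |(f x - g x) * τ x ^ k| ≤ c * C' ^ N := by
    intro k hk x
    by_cases hgood : |τ x| ≤ ε₁ ∧ |x| ≤ R'
    · have : g x = f x := by rw [hgx x, hψ1 x hgood.1, hχ1 x hgood.2]; ring
      rw [this]; simp; positivity
    · have hbad : ε₁ < |τ x| ∨ R' < |x| := by
        rcases not_and_or.mp hgood with h | h
        · exact Or.inl (not_le.mp h)
        · exact Or.inr (not_le.mp h)
      have hfx : |f x| < c := hsmall x hbad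
      have h1 : f x - g x = f x * (1 - ψ x * χ x) := by rw [hgx x]; ring
      rw [h1, abs_mul, abs_mul, abs_pow]
      calc |f x| * |1 - ψ x * χ x| * |τ x| ^ k
          ≤ c * 1 * C' ^ N := by
            apply mul_le_mul
            · exact mul_le_mul hfx.le
                (abs_le.mpr ⟨by linarith [hψχle x], by linarith [hψχ0 x]⟩)
                (abs_nonneg _) hc0.le
            · calc |τ x| ^ k ≤ C' ^ k :=
                  pow_le_pow_left₀ (abs_nonneg _) (hτC' x) k
                _ ≤ C' ^ N := pow_le_pow_right₀ hC'1 hk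
            · positivity
            · positivity
        _ = c * C' ^ N := by ring
  -- the two norm sequences
  set b : ℕ → ℝ := fun k => ⨆ x : ℝ, |f x * τ x ^ k| with hbdef
  set a : ℕ → ℝ := fun k => ⨆ x : ℝ, |(f x - g x) * τ x ^ k| with hadef
  have hbdd_a : ∀ k : ℕ, BddAbove (Set.range fun x => |(f x - g x) * τ x ^ k|) := by
    intro k
    exact ⟨Bf * C' ^ k, by rintro y ⟨x, rfl⟩; exact (hd_le k x).trans (hfτ k x)⟩
  have hbdd_g : ∀ k : ℕ, BddAbove (Set.range fun x => |g x * τ x ^ k|) := by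
    intro k
    exact ⟨Bf * C' ^ k, by rintro y ⟨x, rfl⟩; exact (hg_le k x).trans (hfτ k x)⟩
  have ha_nonneg : ∀ k, 0 ≤ a k := fun k =>
    le_trans (abs_nonneg _) (le_ciSup (hbdd_a k) 0)
  have ha_le : ∀ k, a k ≤ b k := fun k => ciSup_le fun x => (hd_le k x).trans (hble k x)
  have ha_small : ∀ k : ℕ, k ≤ N → a k ≤ c * C' ^ N := fun k hk =>
    ciSup_le fun x => hd_small k hk x
  have ha_sum : Summable a := hsum.of_nonneg_of_le ha_nonneg ha_le
  have hg_sum : Summable (fun k : ℕ => ⨆ x : ℝ, |g x * τ x ^ k|) := by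
    refine hsum.of_nonneg_of_le (fun k => le_trans (abs_nonneg _) (le_ciSup (hbdd_g k) 0))
      (fun k => ciSup_le fun x => (hg_le k x).trans (hble k x))
  -- compact support
  have hgcs : HasCompactSupport g := by
    apply HasCompactSupport.intro (isCompact_closedBall (0:ℝ) (R' + 1))
    intro x hx
    simp only [Metric.mem_closedBall, Real.dist_eq, sub_zero, not_le] at hx
    have : χ x = 0 := by
      by_contra h
      exact absurd (hχne x h) (not_lt.mpr hx.le)
    rw [hgx x, this]; ring
  refine ⟨g, ⟨hfc.mul (hψc.mul hχc), ?_, hg_sum⟩, hgcs, ⟨ε₂, hε₂pos, hε₂1, ?_⟩, ?_⟩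
  · -- tendsto cocompact
    have hev : ∀ᶠ x in cocompact ℝ, (fun _ => (0:ℝ)) x = g x := by
      rw [Filter.eventually_iff, Filter.mem_cocompact]
      refine ⟨Metric.closedBall 0 (R' + 1), isCompact_closedBall _ _, fun x hx => ?_⟩
      simp only [Set.mem_compl_iff, Metric.mem_closedBall, Real.dist_eq, sub_zero, not_le] at hx
      have : χ x = 0 := by
        by_contra h
        exact absurd (hχne x h) (not_lt.mpr hx.le)
      show (fun _ => (0:ℝ)) x = g x
      rw [hgx x, this]; ring
    exact tendsto_const_nhds.congr' hev
  · -- support condition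
    apply closure_minimal
    · intro x hx
      have hψx : ψ x ≠ 0 := by
        intro h
        apply hx
        rw [hgx x, h]; ring
      exact le_of_lt (hψne x hψx)
    · exact isClosed_le (continuous_abs.comp hτc) continuous_const
  · -- norm estimate
    show (∑' k : ℕ, ⨆ x : ℝ, |(f x - g x) * τ x ^ k|) < δ
    have hsplit : ∑ i ∈ Finset.range (N + 1), a i + ∑' i, a (i + (N + 1)) = ∑' i, a i :=
      Summable.sum_add_tsum_nat_add (N + 1) ha_sum
    have hhead : ∑ k ∈ Finset.range (N + 1), a k ≤ ((N:ℝ) + 1) * (c * C' ^ N) := by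
      calc ∑ k ∈ Finset.range (N + 1), a k
          ≤ (Finset.range (N + 1)).card • (c * C' ^ N) :=
            Finset.sum_le_card_nsmul _ _ _ fun i hi =>
              ha_small i (Nat.lt_succ_iff.mp (Finset.mem_range.mp hi))
        _ = ((N:ℝ) + 1) * (c * C' ^ N) := by
            rw [Finset.card_range, nsmul_eq_mul]; push_cast; ring
    have htail2 : (∑' k : ℕ, a (k + (N + 1))) ≤ ∑' k : ℕ, b (k + (N + 1)) :=
      Summable.tsum_le_tsum (fun k => ha_le _) ((summable_nat_add_iff (N + 1)).mpr ha_sum)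
        ((summable_nat_add_iff (N + 1)).mpr hsum)
    have hC'N : (C' : ℝ) ^ N ≠ 0 := (pow_pos hC'0 N).ne'
    have hN1' : ((N:ℝ) + 1) ≠ 0 := hN1.ne'
    have hcval : ((N:ℝ) + 1) * (c * C' ^ N) = δ / 4 := by
      rw [hcdef]; field_simp
    have htailb : (∑' k : ℕ, b (k + (N + 1))) < δ / 2 := htail
    have hfin : (∑' i, a i) < δ := by
      rw [← hsplit]
      linarith
    exact hfin
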